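/- Let M, a, s be positive integers with M > 1 such that ∑_{i=0}^{M-1} (a+i)^2 = s^2. If M = 24·m₁ + 9 for a nonnegative integer m₁, then m₁ ≢ 2 (mod 3). -/

import Mathlib

lemma aux3 (a : ℕ) (n : ℕ) :
    (∑ i ∈ Finset.range (3 * n), ((a : ZMod 3) + i) ^ 2) = 2 * n := by
  induction n with
  | zero => simp
  | succ n ih =>
    have h : 3 * (n + 1) = 3 * n + 1 + 1 + 1 := by ring
    rw [h, Finset.sum_range_succ, Finset.sum_range_succ, Finset.sum_range_succ, ih]
    push_cast
    have h3 : (3 : ZMod 3) = 0 := rfl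
    linear_combination (1 + a ^ 2 + 6 * (n : ZMod 3) + 6 * n * a + 9 * n ^ 2 + 2 * a) * h3

theorem stmt (M a s m₁ : ℕ) (hM : 1 < M) (ha : 1 ≤ a) (hs : 1 ≤ s)
    (hsum : ∑ i ∈ Finset.range M, (a + i) ^ 2 = s ^ 2)
    (hMeq : M = 24 * m₁ + 9) :
    ¬ m₁ % 3 = 2 := by
  intro hm
  obtain ⟨t, ht⟩ : ∃ t, m₁ = 3 * t + 2 := ⟨m₁ / 3, by omega⟩
  have hM3 : M = 3 * (24 * t + 19) := by omega
  have h := congrArg (Nat.cast : ℕ → ZMod 3) hsum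
  push_cast at h
  rw [hM3, aux3] at h
  have hn : ((24 * t + 19 : ℕ) : ZMod 3) = 1 := by
    have : (24 * t + 19) % 3 = 1 := by omega
    rw [← Nat.mod_add_div (24 * t + 19) 3, this]
    push_cast
    simp [show (3 : ZMod 3) = 0 from rfl]
  rw [hn] at h
  have : ∀ x : ZMod 3, x ^ 2 ≠ 2 * 1 := by decide
  exact this _ h.symm
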